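/- Let 0<q<1 and ν > 0. Then the Jackson integral over (0,∞) of z·(-q^{2ν+2}z²;q²)_∞/(-z²;q²)_∞, i.e. (1-q)·Σ_{m=-∞}^∞ q^{2m}·(-q^{2ν+2+2m};q²)_∞/(-q^{2m};q²)_∞, converges and equals (1-q)/(1-q^{2ν}). -/

import Mathlib

/-- The infinite q-Pochhammer symbol over the reals. -/
noncomputable def qpR (q x : ℝ) : ℝ := ∏' n : ℕ, (1 - x * q ^ n)

open Real Filter Finset

lemma qp_sumLog {Q : ℝ} (hQ0 : 0 < Q) (hQ1 : Q < 1) (y : ℝ) (hy : 0 ≤ y) :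
    Summable fun n : ℕ => Real.log (1 + y * Q ^ n) := by
  refine Summable.of_nonneg_of_le
    (fun n => Real.log_nonneg (by nlinarith [pow_nonneg hQ0.le n]))
    (fun n => ?_) ((summable_geometric_of_lt_one hQ0.le hQ1).mul_left y)
  have h1 : (0:ℝ) < 1 + y * Q ^ n := by nlinarith [pow_nonneg hQ0.le n]
  nlinarith [Real.log_le_sub_one_of_pos h1]

lemma qpR_exp {Q : ℝ} (hQ0 : 0 < Q) (hQ1 : Q < 1) (y : ℝ) (hy : 0 ≤ y) :
    qpR Q (-y) = Real.exp (∑' n : ℕ, Real.log (1 + y * Q ^ n)) := by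
  have h2 := Real.rexp_tsum_eq_tprod (f := fun n : ℕ => 1 + y * Q ^ n)
      (fun n => by show (0:ℝ) < 1 + y * Q ^ n; nlinarith [pow_nonneg hQ0.le n])
      (qp_sumLog hQ0 hQ1 y hy)
  have h3 : (fun n : ℕ => 1 - (-y) * Q ^ n) = fun n : ℕ => 1 + y * Q ^ n := by
    funext n; ring
  rw [qpR, h3, ← h2]

lemma one_le_qpR {Q : ℝ} (hQ0 : 0 < Q) (hQ1 : Q < 1) (y : ℝ) (hy : 0 ≤ y) :
    1 ≤ qpR Q (-y) := by
  rw [qpR_exp hQ0 hQ1 y hy]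
  exact Real.one_le_exp (tsum_nonneg fun n =>
    Real.log_nonneg (by nlinarith [pow_nonneg hQ0.le n]))

lemma qpR_le_exp {Q : ℝ} (hQ0 : 0 < Q) (hQ1 : Q < 1) (y : ℝ) (hy : 0 ≤ y) :
    qpR Q (-y) ≤ Real.exp (y * (1 - Q)⁻¹) := by
  rw [qpR_exp hQ0 hQ1 y hy]
  apply Real.exp_le_exp.2
  have hle : ∑' n : ℕ, Real.log (1 + y * Q ^ n) ≤ ∑' n : ℕ, y * Q ^ n := by
    refine (qp_sumLog hQ0 hQ1 y hy).tsum_le_tsum (fun n => ?_)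
      ((summable_geometric_of_lt_one hQ0.le hQ1).mul_left y)
    have h1 : (0:ℝ) < 1 + y * Q ^ n := by nlinarith [pow_nonneg hQ0.le n]
    nlinarith [Real.log_le_sub_one_of_pos h1]
  calc ∑' n : ℕ, Real.log (1 + y * Q ^ n) ≤ ∑' n : ℕ, y * Q ^ n := hle
    _ = y * (1 - Q)⁻¹ := by
        rw [tsum_mul_left, tsum_geometric_of_lt_one hQ0.le hQ1]

lemma qpR_rec {Q : ℝ} (hQ0 : 0 < Q) (hQ1 : Q < 1) (y : ℝ) (hy : 0 ≤ y) :
    qpR Q (-y) = (1 + y) * qpR Q (-(Q * y)) := by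
  rw [qpR_exp hQ0 hQ1 y hy, qpR_exp hQ0 hQ1 (Q * y) (by positivity),
    (qp_sumLog hQ0 hQ1 y hy).tsum_eq_zero_add]
  rw [Real.exp_add, pow_zero, mul_one, Real.exp_log (by linarith)]
  congr 2
  exact tsum_congr fun n => by rw [pow_succ]; ring_nf

lemma qpR_tendsto_one {Q : ℝ} (hQ0 : 0 < Q) (hQ1 : Q < 1) {t : ℕ → ℝ}
    (ht0 : ∀ n, 0 ≤ t n) (ht : Filter.Tendsto t Filter.atTop (nhds 0)) :
    Filter.Tendsto (fun n => qpR Q (-(t n))) Filter.atTop (nhds 1) := by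
  have h1 : Filter.Tendsto (fun n => Real.exp (t n * (1 - Q)⁻¹)) Filter.atTop (nhds 1) := by
    have h2 : Filter.Tendsto (fun n => t n * (1 - Q)⁻¹) Filter.atTop (nhds 0) := by
      simpa using ht.mul_const (1 - Q)⁻¹
    have := (Real.continuous_exp.tendsto 0).comp h2
    simpa [Function.comp_def] using this
  exact tendsto_of_tendsto_of_tendsto_of_le_of_le tendsto_const_nhds h1
    (fun n => one_le_qpR hQ0 hQ1 _ (ht0 n)) (fun n => qpR_le_exp hQ0 hQ1 _ (ht0 n))

theorem stmt15 (q ν : ℝ) (hq0 : 0 < q) (hq1 : q < 1) (hν : 0 < ν) :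
    (Summable fun m : ℤ =>
      q ^ (2 * (m : ℝ)) * qpR (q ^ 2) (-(q ^ (2 * ν + 2 + 2 * (m : ℝ)))) /
        qpR (q ^ 2) (-(q ^ (2 * (m : ℝ))))) ∧
    (1 - q) * ∑' m : ℤ,
        q ^ (2 * (m : ℝ)) * qpR (q ^ 2) (-(q ^ (2 * ν + 2 + 2 * (m : ℝ)))) /
          qpR (q ^ 2) (-(q ^ (2 * (m : ℝ)))) =
      (1 - q) / (1 - q ^ (2 * ν)) := by
  have hQ0 : 0 < q ^ 2 := by positivity
  have hQ1 : q ^ 2 < 1 := by nlinarith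
  set a : ℝ := q ^ (2 * ν) with hadef
  have ha0 : 0 < a := Real.rpow_pos_of_pos hq0 _
  have ha1 : a < 1 := Real.rpow_lt_one hq0.le hq1 (by linarith)
  set y : ℤ → ℝ := fun m => q ^ (2 * (m : ℝ)) with hydef
  have hy0 : ∀ m, 0 < y m := fun m => Real.rpow_pos_of_pos hq0 _
  have hystep : ∀ m : ℤ, y (m + 1) = q ^ 2 * y m := by
    intro m
    simp only [hydef]
    rw [mul_comm (q ^ 2), ← Real.rpow_natCast q 2, ← Real.rpow_add hq0]
    congr 1
    push_cast
    ring
  set A : ℤ → ℝ := fun m => qpR (q ^ 2) (-(a * y m)) with hAdef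
  set B : ℤ → ℝ := fun m => qpR (q ^ 2) (-(y m)) with hBdef
  have hA1 : ∀ m, 1 ≤ A m := fun m => one_le_qpR hQ0 hQ1 _ (by positivity)
  have hB1 : ∀ m, 1 ≤ B m := fun m => one_le_qpR hQ0 hQ1 _ (hy0 m).le
  have hB0 : ∀ m, 0 < B m := fun m => lt_of_lt_of_le one_pos (hB1 m)
  have hA0 : ∀ m, 0 < A m := fun m => lt_of_lt_of_le one_pos (hA1 m)
  have hArec : ∀ m, A m = (1 + a * y m) * A (m + 1) := by
    intro m
    simp only [hAdef]
    rw [qpR_rec hQ0 hQ1 (a * y m) (by positivity), hystep]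
    ring_nf
  have hBrec : ∀ m, B m = (1 + y m) * B (m + 1) := by
    intro m
    simp only [hBdef]
    rw [qpR_rec hQ0 hQ1 (y m) (hy0 m).le, hystep]
  set F : ℤ → ℝ := fun m => A m / B m with hFdef
  have hF0 : ∀ m, 0 ≤ F m := fun m => div_nonneg (hA0 m).le (hB0 m).le
  set g : ℤ → ℝ := fun m =>
      q ^ (2 * (m : ℝ)) * qpR (q ^ 2) (-(q ^ (2 * ν + 2 + 2 * (m : ℝ)))) /
        qpR (q ^ 2) (-(q ^ (2 * (m : ℝ)))) with hgdef
  have hexp : ∀ m : ℤ, q ^ (2 * ν + 2 + 2 * (m : ℝ)) = a * y (m + 1) := by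
    intro m
    simp only [hydef, hadef]
    rw [← Real.rpow_add hq0]
    congr 1
    push_cast
    ring
  have hgeq : ∀ m, g m = y m * A (m + 1) / B m := by
    intro m
    simp only [hgdef, hAdef, hBdef, hydef, hexp m]
  have hgnn : ∀ m, 0 ≤ g m := fun m => by
    rw [hgeq m]; exact div_nonneg (mul_nonneg (hy0 m).le (hA0 (m + 1)).le) (hB0 m).le
  set d : ℝ := (1 - a)⁻¹ with hddef
  have hgF : ∀ m, g m = d * (F (m + 1) - F m) := by
    intro m
    rw [hgeq m]
    have hB' : (0:ℝ) < B (m + 1) := hB0 (m + 1)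
    have h1 : F m = ((1 + a * y m) * A (m + 1)) / ((1 + y m) * B (m + 1)) := by
      simp only [hFdef]
      rw [hArec m, hBrec m]
    have h2 : F (m + 1) = A (m + 1) / B (m + 1) := rfl
    have hym : (0:ℝ) < 1 + y m := by linarith [hy0 m]
    have key : F (m + 1) - F m = (1 - a) * (y m * A (m + 1) / ((1 + y m) * B (m + 1))) := by
      rw [h1, h2]
      field_simp
      ring
    rw [hBrec m, key, hddef, ← mul_assoc,
      inv_mul_cancel₀ (ne_of_gt (by linarith : (0:ℝ) < 1 - a)), one_mul]
  -- limits
  have hyn : ∀ n : ℕ, y (n : ℤ) = (q ^ 2) ^ n := by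
    intro n
    simp only [hydef]
    rw [show (2 : ℝ) * ((n : ℤ) : ℝ) = ((2 * n : ℕ) : ℝ) by push_cast; ring,
      Real.rpow_natCast, pow_mul]
  have hQy : Filter.Tendsto (fun n : ℕ => y (n : ℤ)) Filter.atTop (nhds 0) := by
    simp only [hyn]
    exact tendsto_pow_atTop_nhds_zero_of_lt_one hQ0.le hQ1
  have hAlim : Filter.Tendsto (fun n : ℕ => A (n : ℤ)) Filter.atTop (nhds 1) := by
    have := qpR_tendsto_one hQ0 hQ1 (t := fun n : ℕ => a * y (n : ℤ))
      (fun n => by positivity) (by simpa using hQy.const_mul a)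
    simpa [hAdef] using this
  have hBlim : Filter.Tendsto (fun n : ℕ => B (n : ℤ)) Filter.atTop (nhds 1) := by
    have := qpR_tendsto_one hQ0 hQ1 (t := fun n : ℕ => y (n : ℤ))
      (fun n => (hy0 _).le) hQy
    simpa [hBdef] using this
  have hFnat : Filter.Tendsto (fun n : ℕ => F (n : ℤ)) Filter.atTop (nhds 1) := by
    have := hAlim.div hBlim one_ne_zero
    simpa [hFdef, Pi.div_def] using this
  -- negative side bound
  set r : ℝ := (1 + a) / 2 with hrdef
  have hr1 : r < 1 := by rw [hrdef]; linarith
  have hr0 : 0 ≤ r := by rw [hrdef]; linarith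
  have hu1 : ∀ n : ℕ, 1 ≤ y (-(n + 1) : ℤ) := by
    intro n
    simp only [hydef]
    apply Real.one_le_rpow_of_pos_of_le_one_of_nonpos hq0 hq1.le
    push_cast
    have : (0:ℝ) ≤ (n : ℝ) := Nat.cast_nonneg n
    linarith
  have hFstep : ∀ n : ℕ, F (-(n + 1) : ℤ) ≤ r * F (-(n : ℤ)) := by
    intro n
    set u : ℝ := y (-(n + 1) : ℤ) with hudef
    have hu : 1 ≤ u := hu1 n
    have hm : (-(n + 1) + 1 : ℤ) = -(n : ℤ) := by ring
    have h1 : F (-(n + 1) : ℤ) = ((1 + a * u) / (1 + u)) * F (-(n : ℤ)) := by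
      simp only [hFdef]
      rw [hArec (-(n + 1) : ℤ), hBrec (-(n + 1) : ℤ), hm, mul_div_mul_comm]
    rw [h1]
    apply mul_le_mul_of_nonneg_right _ (hF0 _)
    rw [div_le_iff₀ (by linarith : (0:ℝ) < 1 + u), hrdef]
    nlinarith
  have hFneg_le : ∀ n : ℕ, F (-(n : ℤ)) ≤ F 0 * r ^ n := by
    intro n
    induction n with
    | zero => simp
    | succ k ih =>
      have := hFstep k
      calc F (-(k + 1 : ℕ) : ℤ) = F (-((k : ℤ) + 1)) := by push_cast; ring_nf
        _ ≤ r * F (-(k : ℤ)) := hFstep k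
        _ ≤ r * (F 0 * r ^ k) := by nlinarith [hF0 (-(k : ℤ))]
        _ = F 0 * r ^ (k + 1) := by ring
  have hFneg : Filter.Tendsto (fun n : ℕ => F (-(n : ℤ))) Filter.atTop (nhds 0) := by
    have hb : Filter.Tendsto (fun n : ℕ => F 0 * r ^ n) Filter.atTop (nhds 0) := by
      simpa using (tendsto_pow_atTop_nhds_zero_of_lt_one hr0 hr1).const_mul (F 0)
    exact tendsto_of_tendsto_of_tendsto_of_le_of_le tendsto_const_nhds hb
      (fun n => hF0 _) (fun n => hFneg_le n)
  -- positive-side partial sums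
  have hsum_pos : HasSum (fun n : ℕ => g (n : ℤ)) (d * (1 - F 0)) := by
    rw [hasSum_iff_tendsto_nat_of_nonneg (fun n => hgnn (n : ℤ))]
    have hps : ∀ n : ℕ, ∑ i ∈ Finset.range n, g (i : ℤ) = d * (F (n : ℤ) - F 0) := by
      intro n
      have : ∀ i ∈ Finset.range n, g (i : ℤ) =
          d * ((fun k : ℕ => F (k : ℤ)) (i + 1) - (fun k : ℕ => F (k : ℤ)) i) := by
        intro i _
        rw [hgF (i : ℤ)]
        push_cast
        ring_nf
      rw [Finset.sum_congr rfl this, ← Finset.mul_sum,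
        Finset.sum_range_sub (fun k : ℕ => F (k : ℤ))]
      simp
    simp only [hps]
    have := (hFnat.sub_const (F 0)).const_mul d
    simpa using this
  have hsum_neg : HasSum (fun n : ℕ => g (-(n + 1) : ℤ)) (d * F 0) := by
    rw [hasSum_iff_tendsto_nat_of_nonneg (fun n => hgnn _)]
    have hps : ∀ n : ℕ, ∑ i ∈ Finset.range n, g (-(i + 1) : ℤ) =
        d * (F 0 - F (-(n : ℤ))) := by
      intro n
      have : ∀ i ∈ Finset.range n, g (-(i + 1) : ℤ) =
          d * ((fun k : ℕ => F (-(k : ℤ))) i - (fun k : ℕ => F (-(k : ℤ))) (i + 1)) := by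
        intro i _
        rw [hgF (-(i + 1) : ℤ)]
        have h1 : (-(i + 1) + 1 : ℤ) = -(i : ℤ) := by ring
        rw [h1]
        push_cast
        ring_nf
      rw [Finset.sum_congr rfl this, ← Finset.mul_sum,
        Finset.sum_range_sub' (fun k : ℕ => F (-(k : ℤ)))]
      simp
    simp only [hps]
    have := ((tendsto_const_nhds (x := F 0)).sub hFneg).const_mul d
    simpa using this
  have hsum : HasSum g (d * (1 - F 0) + d * F 0) := by
    exact HasSum.of_nat_of_neg_add_one hsum_pos hsum_neg
  have hsum' : HasSum g d := by
    rwa [show d * (1 - F 0) + d * F 0 = d by ring] at hsum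
  refine ⟨hsum'.summable, ?_⟩
  rw [hsum'.tsum_eq, hddef, div_eq_mul_inv]
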